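/- Let p, q be coprime polynomials over ℂ with max(deg p, deg q) ≥ 2, so that f = p/q is a rational map of degree at least 2, and let v be a polynomial over ℂ of degree at most 2 (so that v(z)∂/∂z is a global holomorphic vector field on ℙ¹). Suppose that for every z ∈ ℂ with q(z) ≠ 0 one has v(p(z)/q(z))·q(z)² = (p'(z)·q(z) − p(z)·q'(z))·v(z), i.e. v∘f = f'·v wherever f is defined. Then v = 0. -/

import Mathlib

open Polynomial

/-- The kernel computation (ct20)–(ct24) in Claim claim:ct1: a rational map
`f = p/q` of degree at least `2` admits no nonzero invariant global
holomorphic vector field `v(z)∂/∂z` (with `v` a polynomial of degree ≤ 2):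
`v ∘ f = f' · v` forces `v = 0`. -/
theorem no_invariant_vector_field
    (p q v : Polynomial ℂ) (hpq : IsCoprime p q)
    (hdeg : 2 ≤ max p.degree q.degree) (hv : v.degree ≤ 2)
    (hinv : ∀ z : ℂ, q.eval z ≠ 0 →
      v.eval (p.eval z / q.eval z) * (q.eval z) ^ 2 =
        (p.derivative.eval z * q.eval z - p.eval z * q.derivative.eval z)
          * v.eval z) :
    v = 0 := by
  by_contra hv0
  -- q ≠ 0
  have hq0 : q ≠ 0 := by
    intro h
    subst h
    have hu := isCoprime_zero_right.mp hpq
    rw [degree_zero, degree_eq_zero_of_isUnit hu] at hdeg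
    simp at hdeg
    exact (by decide : ¬(2:WithBot ℕ) ≤ 0) hdeg
  -- representation of v
  have hvco : ∀ n, 3 ≤ n → v.coeff n = 0 := by
    intro n hn
    refine coeff_eq_zero_of_degree_lt (lt_of_le_of_lt hv ?_)
    exact_mod_cast (by omega : 2 < n)
  have hvrep : v = C (v.coeff 0) + C (v.coeff 1) * X + C (v.coeff 2) * X ^ 2 := by
    ext n
    rcases n with _ | _ | _ | n
    · simp [coeff_X_pow]
    · simp [coeff_X_pow]
    · simp [coeff_X_pow]
    · rw [hvco (n + 3) (by omega)]
      simp [coeff_X_pow, coeff_C]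
  -- polynomial form of the invariance identity
  have hI : C (v.coeff 2) * p ^ 2 + C (v.coeff 1) * p * q + C (v.coeff 0) * q ^ 2
      = (derivative p * q - p * derivative q) * v := by
    apply eq_of_infinite_eval_eq
    apply ((finite_setOf_isRoot hq0).infinite_compl).mono
    intro z hz
    have hqz : q.eval z ≠ 0 := hz
    have h := hinv z hqz
    rw [hvrep] at h
    simp only [Set.mem_setOf_eq, eval_add, eval_mul, eval_sub, eval_pow, eval_C, eval_X] at h ⊢
    field_simp at h
    have hvz : eval z v = v.coeff 0 + v.coeff 1 * z + v.coeff 2 * z ^ 2 := by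
      rw [hvrep]; simp
    rw [hvz]
    refine mul_left_cancel₀ (pow_ne_zero 3 hqz) ?_
    linear_combination (eval z q) ^ 3 * h
  set r : ℂ[X] := p - X * q with hrdef
  have hr0 : r ≠ 0 := by
    intro h
    have hpXq : p = X * q := by
      have := sub_eq_zero.mp (hrdef ▸ h)
      linear_combination this
    have hu : IsUnit q := hpq.isUnit_of_dvd' ⟨X, by rw [hpXq]; ring⟩ dvd_rfl
    rw [hpXq, degree_mul, degree_X, degree_eq_zero_of_isUnit hu] at hdeg
    simp at hdeg
  have hrq : ∀ a : ℂ, r.eval a = 0 → q.eval a ≠ 0 := by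
    intro a h1 h2
    have hpa : p.eval a = 0 := by
      have : r.eval a = p.eval a - a * q.eval a := by rw [hrdef]; simp
      rw [this, h2] at h1
      linear_combination h1
    obtain ⟨x, y, hxy⟩ := hpq
    have := congrArg (eval a) hxy
    simp [hpa, h2] at this
  have hdr0 : derivative r = derivative p - q - X * derivative q := by
    rw [hrdef]
    simp only [derivative_sub, derivative_mul, derivative_X, one_mul]
    ring
  have hv' : derivative v = C (v.coeff 1) + C (v.coeff 2) * (2 * X) := by
    rw [hvrep, derivative_add, derivative_add, derivative_mul, derivative_mul,
      derivative_C, derivative_X, derivative_X_pow]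
    simp
    exact Or.inl (map_ofNat C 2)
  have hII : C (v.coeff 2) * r ^ 2 + derivative v * r * q
      = (derivative r * q - r * derivative q) * v := by
    rw [hv', hdr0, hrdef]
    linear_combination hI + q ^ 2 * hvrep
  obtain ⟨c2, hc2⟩ : ∃ c : ℂ, c = v.coeff 2 := ⟨_, rfl⟩
  rw [← hc2] at hII
  -- each fixed point forces vanishing of v with at least the same multiplicity
  have hmult : ∀ a : ℂ, rootMultiplicity a r ≤ rootMultiplicity a v := by
    intro a
    by_cases hra : r.eval a = 0
    swap
    · rw [rootMultiplicity_eq_zero hra]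
      exact Nat.zero_le _
    have hqa : q.eval a ≠ 0 := hrq a hra
    obtain ⟨s, hs, hsnd⟩ := r.exists_eq_pow_rootMultiplicity_mul_and_not_dvd hr0 a
    have hsa : s.eval a ≠ 0 := fun h => hsnd (dvd_iff_isRoot.mpr h)
    obtain ⟨m', hm'⟩ : ∃ m', rootMultiplicity a r = m' + 1 :=
      ⟨rootMultiplicity a r - 1, by
        have := (rootMultiplicity_pos hr0).mpr hra; omega⟩
    rw [hm'] at hs
    have hdr : derivative r
        = (X - C a) ^ m' * (C ((m' + 1 : ℕ) : ℂ) * s + (X - C a) * derivative s) := by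
      rw [hs, derivative_mul, derivative_pow, derivative_sub, derivative_X, derivative_C]
      simp only [Nat.add_sub_cancel, sub_zero, mul_one]
      ring
    set G : ℂ[X] := (C ((m' + 1 : ℕ) : ℂ) * s + (X - C a) * derivative s) * q
        - (X - C a) * s * derivative q with hG
    have hGa : G.eval a = ((m' + 1 : ℕ) : ℂ) * s.eval a * q.eval a := by
      rw [hG]; simp
    rw [hdr, hs] at hII
    -- first: v vanishes at a
    have hva : v.eval a = 0 := by
      have hkey1 : ((X - C a) * (C c2 * (X - C a) ^ (m' + 1) * s ^ 2
          + derivative v * s * q)) * (X - C a) ^ m' = (G * v) * (X - C a) ^ m' := by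
        rw [hG]
        linear_combination hII
      have h2 := mul_right_cancel₀ (pow_ne_zero m' (X_sub_C_ne_zero a)) hkey1
      have h3 : eval a G * eval a v = 0 := by
        have h4 := congrArg (eval a) h2
        simp only [eval_mul, eval_add, eval_sub, eval_pow, eval_C, eval_X, sub_self,
          zero_mul] at h4
        exact h4.symm
      rcases mul_eq_zero.mp h3 with h4 | h4
      · rw [hGa] at h4
        exact absurd h4 (mul_ne_zero (mul_ne_zero
          (Nat.cast_ne_zero.mpr (Nat.succ_ne_zero m')) hsa) hqa)
      · exact h4
    by_contra hlt
    push_neg at hlt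
    obtain ⟨u, hu, hund⟩ := v.exists_eq_pow_rootMultiplicity_mul_and_not_dvd hv0 a
    have hua : u.eval a ≠ 0 := fun h => hund (dvd_iff_isRoot.mpr h)
    obtain ⟨k', hk'⟩ : ∃ k', rootMultiplicity a v = k' + 1 :=
      ⟨rootMultiplicity a v - 1, by
        have := (rootMultiplicity_pos hv0).mpr hva; omega⟩
    obtain ⟨t, ht⟩ : ∃ t, m' = k' + t + 1 := ⟨m' - k' - 1, by omega⟩
    rw [hk'] at hu
    have hdv : derivative v
        = (X - C a) ^ k' * (C ((k' + 1 : ℕ) : ℂ) * u + (X - C a) * derivative u) := by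
      rw [hu, derivative_mul, derivative_pow, derivative_sub, derivative_X, derivative_C]
      simp only [Nat.add_sub_cancel, sub_zero, mul_one]
      ring
    rw [hdv, hu, ht] at hII
    have hkey2 : (C c2 * (X - C a) ^ (t + 2) * s ^ 2
          + (C ((k' + 1 : ℕ) : ℂ) * u + (X - C a) * derivative u) * s * q)
            * (X - C a) ^ (k' + (k' + t + 2))
        = (G * u) * (X - C a) ^ (k' + (k' + t + 2)) := by
      rw [hG, ht]
      linear_combination hII
    have h2 := mul_right_cancel₀ (pow_ne_zero _ (X_sub_C_ne_zero a)) hkey2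
    have h3 := congrArg (eval a) h2
    simp only [eval_mul, eval_add, eval_sub, eval_pow, eval_C, eval_X, sub_self,
      zero_mul, mul_zero, zero_add] at h3
    rw [hGa] at h3
    have h4 : (((k' + 1 : ℕ) : ℂ) - ((m' + 1 : ℕ) : ℂ))
        * (eval a u * eval a s * eval a q) = 0 := by
      rw [zero_pow (by omega : t + 2 ≠ 0)] at h3
      linear_combination h3
    rcases mul_eq_zero.mp h4 with h5 | h5
    · have h6 : ((k' + 1 : ℕ) : ℂ) = ((m' + 1 : ℕ) : ℂ) := sub_eq_zero.mp h5
      have : k' + 1 = m' + 1 := Nat.cast_injective h6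
      omega
    · exact absurd h5 (mul_ne_zero (mul_ne_zero hua hsa) hqa)
  -- r divides v
  have hdvd : r ∣ v :=
    (IsAlgClosed.splits r).dvd_of_roots_le_roots hr0
      (Multiset.le_iff_count.mpr fun a => by simpa [count_roots] using hmult a)
  obtain ⟨g, hvg⟩ := hdvd
  have hg0 : g ≠ 0 := by rintro rfl; rw [mul_zero] at hvg; exact hv0 hvg
  have hdvg : derivative v = derivative r * g + r * derivative g := by
    rw [hvg, derivative_mul]
  have h3 : r ^ 2 * (C c2 + derivative (g * q)) = 0 := by
    rw [derivative_mul]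
    linear_combination hII + (derivative r * q - r * derivative q) * hvg - (r * q) * hdvg
  have h4 : C c2 + derivative (g * q) = 0 :=
    (mul_eq_zero.mp h3).resolve_left (pow_ne_zero 2 hr0)
  have hdgq : derivative (g * q) = - C c2 := by linear_combination h4
  -- degree bookkeeping
  have hgq1 : (g * q).natDegree ≤ 1 := by
    by_contra hc
    push_neg at hc
    have hN : 2 ≤ (g * q).natDegree := hc
    have h5 := coeff_derivative (g * q) ((g * q).natDegree - 1)
    rw [hdgq] at h5
    have e1 : (g * q).natDegree - 1 + 1 = (g * q).natDegree := by omega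
    rw [e1] at h5
    have h6 : (- C c2).coeff ((g * q).natDegree - 1) = 0 := by
      rw [coeff_neg, coeff_C, if_neg (by omega)]
      simp
    rw [h6] at h5
    have h7 : (g * q).coeff (g * q).natDegree ≠ 0 :=
      leadingCoeff_ne_zero.mpr (mul_ne_zero hg0 hq0)
    have h8 : (((g * q).natDegree - 1 : ℕ) : ℂ) + 1 ≠ 0 := by
      have : ((((g * q).natDegree - 1 : ℕ) : ℂ) + 1) = (((g * q).natDegree - 1 + 1 : ℕ) : ℂ) := by
        push_cast; ring
      rw [this]
      exact Nat.cast_ne_zero.mpr (by omega)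
    exact mul_ne_zero h7 h8 h5.symm
  have hng : g.natDegree + q.natDegree ≤ 1 := by
    rw [← natDegree_mul hg0 hq0]; exact hgq1
  have hnv : r.natDegree + g.natDegree ≤ 2 := by
    rw [← natDegree_mul hr0 hg0, ← hvg]
    exact natDegree_le_of_degree_le hv
  have hdp : 2 ≤ p.degree := by
    rcases le_max_iff.mp hdeg with h | h
    · exact h
    · have hqd : q.degree ≤ (1 : ℕ) := degree_le_of_natDegree_le (by omega : q.natDegree ≤ 1)
      have := h.trans hqd
      norm_num at this
  have hnp : 2 ≤ p.natDegree := by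
    by_contra hc
    push_neg at hc
    have h5 : p.degree ≤ (1 : ℕ) := degree_le_of_natDegree_le (by omega : p.natDegree ≤ 1)
    have := hdp.trans h5
    norm_num at this
  have hp_eq : p = r + X * q := by rw [hrdef]; ring
  have hple : p.natDegree ≤ max r.natDegree (1 + q.natDegree) := by
    calc p.natDegree ≤ max r.natDegree (X * q).natDegree := by
          conv_lhs => rw [hp_eq]
          exact natDegree_add_le _ _
    _ ≤ max r.natDegree (1 + q.natDegree) := by
          have : (X * q).natDegree = 1 + q.natDegree := by
            rw [natDegree_mul X_ne_zero hq0, natDegree_X]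
          omega
  rcases Nat.eq_zero_or_pos g.natDegree with hgd | hgd
  · -- g is a nonzero constant
    obtain ⟨γ, hγ⟩ := natDegree_eq_zero.mp hgd
    have hγ0 : γ ≠ 0 := by rintro rfl; rw [map_zero] at hγ; exact hg0 hγ.symm
    have hnp2 : p.natDegree = 2 := le_antisymm (hple.trans (max_le (by omega) (by omega))) hnp
    have hp0' : p ≠ 0 := fun h => by rw [h] at hnp2; simp at hnp2
    have hlead : p.coeff 2 ≠ 0 := by
      have := leadingCoeff_ne_zero.mpr hp0'
      rwa [leadingCoeff, hnp2] at this
    have hcr2 : c2 = r.coeff 2 * γ := by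
      rw [hc2, hvg, ← hγ, coeff_mul_C]
    have hq1c : γ * q.coeff 1 = - c2 := by
      have h6 := congrArg (fun h : ℂ[X] => h.coeff 0) hdgq
      simp only [← hγ, derivative_C_mul, coeff_C_mul, coeff_derivative, coeff_neg, coeff_C,
        if_pos rfl] at h6
      simpa using h6
    have hp2 : p.coeff 2 = r.coeff 2 + q.coeff 1 := by
      conv_lhs => rw [hp_eq]
      rw [coeff_add]
      congr 1
      exact coeff_X_mul q 1
    apply hlead
    rw [hp2]
    have h9 : γ * (r.coeff 2 + q.coeff 1) = 0 := by linear_combination hq1c - hcr2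
    exact (mul_eq_zero.mp h9).resolve_left hγ0
  · have hq0d : q.natDegree = 0 := by omega
    have : p.natDegree ≤ 1 := hple.trans (max_le (by omega) (by omega))
    omega
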